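/- Let ū : ℝ² → ℝ be C² and satisfy Δū + (8/(α(1+|y|²)²))(e^{ū} − 1) = 0 on ℝ², with 0 < α ≤ 1. Define v(y) := ū(y) − (2/α) ln(1+|y|²) + ln(8/α) and w(y) := ln((1+|y|²)^{2(1/α − 1)} e^{v(y)}). Then w satisfies Δw + e^w = 8(1/α − 1)/(1+|y|²)² on ℝ²; in particular Δw + e^w ≥ 0, with equality everywhere iff α = 1. -/

import Mathlib

open MeasureTheory Real RealInnerProductSpace

noncomputable section

abbrev E3 := EuclideanSpace ℝ (Fin 3)
abbrev E2 := EuclideanSpace ℝ (Fin 2)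

/-- Flat Laplacian (sum of second partials) on `E3`. -/
def lap3 (f : E3 → ℝ) (x : E3) : ℝ :=
  ∑ i, fderiv ℝ (fun y => fderiv ℝ f y (EuclideanSpace.single i 1)) x (EuclideanSpace.single i 1)

/-- Flat Laplacian (sum of second partials) on `E2`. -/
def lap2 (f : E2 → ℝ) (x : E2) : ℝ :=
  ∑ i, fderiv ℝ (fun y => fderiv ℝ f y (EuclideanSpace.single i 1)) x (EuclideanSpace.single i 1)

/-- The point `(a, b, c)` of `E3`. -/
def mk3 (a b c : ℝ) : E3 := (WithLp.equiv 2 (Fin 3 → ℝ)).symm ![a, b, c]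

/-- Reflection of `ℝ²` across the first coordinate axis. -/
def refl2 (y : E2) : E2 := (WithLp.equiv 2 (Fin 2 → ℝ)).symm ![y 0, -(y 1)]

lemma qpos (y : E2) : (0:ℝ) < 1 + ‖y‖ ^ 2 := by positivity

lemma hasFDeriv_q (y : E2) :
    HasFDerivAt (fun z : E2 => 1 + ‖z‖ ^ 2) (2 • (innerSL ℝ y)) y :=
  ((hasStrictFDerivAt_norm_sq y).hasFDerivAt).const_add 1

lemma hderiv_val (c : ℝ) (y : E2) (i : Fin 2) :
    fderiv ℝ (fun z : E2 => c - 2 * Real.log (1 + ‖z‖ ^ 2)) y (EuclideanSpace.single i 1)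
      = -4 * y i / (1 + ‖y‖ ^ 2) := by
  have hl := (hasFDeriv_q y).log (qpos y).ne'
  have hh := (hl.const_mul 2).const_sub c
  rw [hh.fderiv]
  simp [EuclideanSpace.inner_single_right, real_inner_comm]
  field_simp
  ring

lemma hasFDeriv_F (y : E2) (i : Fin 2) :
    HasFDerivAt (fun z : E2 => -4 * z i / (1 + ‖z‖ ^ 2))
      (((-4 * y i) • ((-(((1 + ‖y‖ ^ 2) ^ 2)⁻¹)) • (2 • innerSL ℝ y)))
        + ((1 + ‖y‖ ^ 2)⁻¹ • ((-4:ℝ) • (EuclideanSpace.proj i : E2 →L[ℝ] ℝ)))) y := by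
  have hnum : HasFDerivAt (fun z : E2 => -4 * z i)
      ((-4:ℝ) • (EuclideanSpace.proj i : E2 →L[ℝ] ℝ)) y :=
    ((EuclideanSpace.proj (𝕜 := ℝ) i).hasFDerivAt (x := y)).const_mul (-4)
  have hinv : HasFDerivAt (fun z : E2 => (1 + ‖z‖ ^ 2)⁻¹)
      ((-(((1 + ‖y‖ ^ 2) ^ 2)⁻¹)) • (2 • innerSL ℝ y)) y :=
    (hasDerivAt_inv (qpos y).ne').comp_hasFDerivAt y (hasFDeriv_q y)
  have h := hnum.mul hinv
  simpa [div_eq_mul_inv, Pi.mul_def] using h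

lemma Fderiv_val (y : E2) (i : Fin 2) :
    fderiv ℝ (fun z : E2 => -4 * z i / (1 + ‖z‖ ^ 2)) y (EuclideanSpace.single i 1)
      = -4 / (1 + ‖y‖ ^ 2) + 8 * (y i) ^ 2 / (1 + ‖y‖ ^ 2) ^ 2 := by
  rw [(hasFDeriv_F y i).fderiv]
  simp [EuclideanSpace.inner_single_right, real_inner_comm]
  field_simp
  fin_cases i <;> simp <;> ring

lemma norm_sq_E2 (x : E2) : ‖x‖ ^ 2 = x 0 ^ 2 + x 1 ^ 2 := by
  rw [EuclideanSpace.norm_eq, Real.sq_sqrt (by positivity)]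
  simp [Fin.sum_univ_two, sq_abs]

lemma lap2_decomp (ubar : E2 → ℝ) (hub : ContDiff ℝ 2 ubar) (c : ℝ) (x : E2) :
    lap2 (fun y => ubar y + (c - 2 * Real.log (1 + ‖y‖ ^ 2))) x
      = lap2 ubar x - 8 / (1 + ‖x‖ ^ 2) ^ 2 := by
  have hub1 : Differentiable ℝ ubar := hub.differentiable (by norm_num)
  have hfd : ContDiff ℝ 1 (fderiv ℝ ubar) := hub.fderiv_right (by norm_num)
  unfold lap2
  have key : ∀ i : Fin 2,
      fderiv ℝ (fun y => fderiv ℝ (fun z => ubar z + (c - 2 * Real.log (1 + ‖z‖ ^ 2))) y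
          (EuclideanSpace.single i 1)) x (EuclideanSpace.single i 1)
        = fderiv ℝ (fun y => fderiv ℝ ubar y (EuclideanSpace.single i 1)) x
            (EuclideanSpace.single i 1)
          + (-4 / (1 + ‖x‖ ^ 2) + 8 * (x i) ^ 2 / (1 + ‖x‖ ^ 2) ^ 2) := by
    intro i
    have hfe : (fun y => fderiv ℝ (fun z => ubar z + (c - 2 * Real.log (1 + ‖z‖ ^ 2))) y
          (EuclideanSpace.single i 1))
        = fun y => fderiv ℝ ubar y (EuclideanSpace.single i 1) + (-4 * y i / (1 + ‖y‖ ^ 2)) := by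
      funext y
      have hhd : DifferentiableAt ℝ (fun z : E2 => c - 2 * Real.log (1 + ‖z‖ ^ 2)) y :=
        ((((hasFDeriv_q y).log (qpos y).ne').const_mul 2).const_sub c).differentiableAt
      rw [fderiv_fun_add (hub1 y) hhd]
      simp [hderiv_val c y i]
    rw [hfe]
    have hdu : DifferentiableAt ℝ (fun y => fderiv ℝ ubar y (EuclideanSpace.single i 1)) x := by
      have := ((ContinuousLinearMap.apply ℝ ℝ (EuclideanSpace.single i 1)).differentiable.comp
        (hfd.differentiable one_ne_zero)) x
      simpa [Function.comp_def] using this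
    have hdF : DifferentiableAt ℝ (fun y : E2 => -4 * y i / (1 + ‖y‖ ^ 2)) x :=
      (hasFDeriv_F x i).differentiableAt
    rw [fderiv_fun_add hdu hdF, ContinuousLinearMap.add_apply, Fderiv_val x i]
  rw [Finset.sum_congr rfl (fun i _ => key i), Finset.sum_add_distrib]
  congr 1
  rw [Fin.sum_univ_two, norm_sq_E2 x]
  have h0 : (0:ℝ) < 1 + (x 0 ^ 2 + x 1 ^ 2) := by positivity
  field_simp
  ring

/-- the change of variables turning the projected mean field equation into
a Liouville-type equation: with `v = ū − (2/α) ln(1+|y|²) + ln(8/α)` and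
`w = ln((1+|y|²)^{2(1/α−1)} e^v)`, one has `Δw + e^w = 8(1/α−1)/(1+|y|²)²`, hence
`Δw + e^w ≥ 0`, with equality everywhere iff `α = 1`. -/
theorem liouville_transform (α : ℝ) (hα0 : 0 < α) (hα1 : α ≤ 1)
    (ubar : E2 → ℝ) (hub : ContDiff ℝ 2 ubar)
    (hpde : ∀ y : E2, lap2 ubar y + 8 / (α * (1 + ‖y‖ ^ 2) ^ 2) * (Real.exp (ubar y) - 1) = 0)
    (v w : E2 → ℝ)
    (hv : ∀ y, v y = ubar y - 2 / α * Real.log (1 + ‖y‖ ^ 2) + Real.log (8 / α))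
    (hw : ∀ y, w y = Real.log ((1 + ‖y‖ ^ 2) ^ (2 * (1 / α - 1)) * Real.exp (v y))) :
    (∀ y : E2, lap2 w y + Real.exp (w y) = 8 * (1 / α - 1) / (1 + ‖y‖ ^ 2) ^ 2) ∧
      (∀ y : E2, 0 ≤ lap2 w y + Real.exp (w y)) ∧
      ((∀ y : E2, lap2 w y + Real.exp (w y) = 0) ↔ α = 1) := by
  have hα : α ≠ 0 := hα0.ne'
  have hw' : w = fun y => ubar y + (Real.log (8 / α) - 2 * Real.log (1 + ‖y‖ ^ 2)) := by
    funext y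
    rw [hw y, Real.log_mul (Real.rpow_pos_of_pos (qpos y) _).ne' (Real.exp_pos _).ne',
      Real.log_rpow (qpos y), Real.log_exp, hv y]
    field_simp
    ring
  have hexp : ∀ y, Real.exp (w y) = 8 / α * Real.exp (ubar y) / (1 + ‖y‖ ^ 2) ^ 2 := by
    intro y
    have h8 : (0:ℝ) < 8 / α := by positivity
    have h2 : Real.exp (2 * Real.log (1 + ‖y‖ ^ 2)) = (1 + ‖y‖ ^ 2) ^ 2 := by
      rw [two_mul, Real.exp_add, Real.exp_log (qpos y)]; ring
    rw [hw']
    simp only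
    rw [Real.exp_add, Real.exp_sub, Real.exp_log h8, h2]
    ring
  have hmain : ∀ y : E2, lap2 w y + Real.exp (w y) = 8 * (1 / α - 1) / (1 + ‖y‖ ^ 2) ^ 2 := by
    intro y
    rw [hexp y, hw', lap2_decomp ubar hub _ y]
    have hq0 : (1 + ‖y‖ ^ 2) ≠ 0 := (qpos y).ne'
    have hL : lap2 ubar y = -(8 / (α * (1 + ‖y‖ ^ 2) ^ 2) * (Real.exp (ubar y) - 1)) := by
      linarith [hpde y]
    rw [hL]
    field_simp
    ring
  refine ⟨hmain, ?_, ?_⟩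
  · intro y
    rw [hmain y]
    have h1 : (1:ℝ) ≤ 1 / α := by rw [le_div_iff₀ hα0]; linarith
    have h2 : (0:ℝ) ≤ 8 * (1 / α - 1) := by linarith
    exact div_nonneg h2 (by positivity)
  · constructor
    · intro hz
      have h0 := hmain 0
      rw [hz 0] at h0
      norm_num at h0
      have h1 : α⁻¹ = 1 := by linarith
      exact inv_eq_one.mp h1
    · intro h1
      subst h1
      intro y
      rw [hmain y]
      norm_num
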